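/- arXiv:2502.11057 — 2 statements merged into one kernel-verified Lean document; each statement's English description precedes it below -/
import Mathlib

section
/- Let X_1, ..., X_n, X_{test} be i.i.d. real-valued random variables (exchangeable suffices), and let \alpha \in (0,1). Let \hat{q} be the \lceil (n+1)(1-\alpha) \rceil-th smallest value among X_1, ..., X_n (assuming \lceil (n+1)(1-\alpha) \rceil \le n). Then P(X_{test} \le \hat{q}) \ge 1 - \alpha. -/
open Finset

lemma countP_ofFn' {m : ℕ} (p : ℝ → Bool) (f : Fin m → ℝ) :
    (List.ofFn f).countP p = (Finset.univ.filter (fun i => p (f i))).card := by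
  induction m with
  | zero => simp
  | succ m ih =>
    rw [List.ofFn_succ, List.countP_cons, ih, Finset.card_filter, Finset.card_filter,
      Fin.sum_univ_succ]
    simp [Function.comp]
    omega
lemma sorted_le_getD_iff {s : List ℝ} (hs : List.Pairwise (· ≤ ·) s) {l : ℕ}
    (hl1 : 1 ≤ l) (hln : l ≤ s.length) (x : ℝ) :
    x ≤ s.getD (l-1) 0 ↔ s.countP (fun z => decide (z < x)) < l := by
  have hlt : l - 1 < s.length := by omega
  rw [List.getD_eq_getElem s 0 hlt]
  constructor
  · intro hx
    -- countP ≤ l - 1 : all elements < x are in take (l-1)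
    have hsplit : s = s.take (l-1) ++ s.drop (l-1) := (List.take_append_drop _ s).symm
    have hdrop : (s.drop (l-1)).countP (fun z => decide (z < x)) = 0 := by
      rw [List.countP_eq_zero]
      intro a ha
      obtain ⟨j, hj, rfl⟩ := List.mem_iff_getElem.1 ha
      rw [List.getElem_drop]
      simp only [decide_eq_true_eq, not_lt]
      refine le_trans hx ?_
      rcases Nat.eq_or_lt_of_le (Nat.le_add_right (l-1) j) with h | h
      · exact le_of_eq (by congr 1)
      · exact List.pairwise_iff_getElem.1 hs _ _ _ _ h
    calc s.countP (fun z => decide (z < x))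
        = (s.take (l-1)).countP _ + (s.drop (l-1)).countP _ := by
          conv_lhs => rw [hsplit]; rw [List.countP_append]
      _ ≤ (l-1) + 0 := by
          rw [hdrop]; exact add_le_add (le_trans List.countP_le_length (by simp)) le_rfl
      _ < l := by omega
  · intro hc
    by_contra hx
    push_neg at hx
    -- all of take l are < x, so countP ≥ l
    have : l ≤ s.countP (fun z => decide (z < x)) := by
      have hsplit : s = s.take l ++ s.drop l := (List.take_append_drop _ s).symm
      have htake : (s.take l).countP (fun z => decide (z < x)) = l := by
        have hall : ∀ a ∈ s.take l, (fun z => decide (z < x)) a = true := by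
          intro a ha
          obtain ⟨j, hj, rfl⟩ := List.mem_iff_getElem.1 ha
          have hjl : j < l := lt_of_lt_of_le hj (by simp [List.length_take])
          rw [List.getElem_take]
          simp only [decide_eq_true_eq]
          have hjlen : j < s.length := by omega
          have : s[j] ≤ s[l-1] := by
            rcases Nat.eq_or_lt_of_le (Nat.le_of_lt_succ (by omega : j < (l-1)+1)) with h | h
            · exact le_of_eq (by congr 1)
            · exact List.pairwise_iff_getElem.1 hs _ _ _ _ h
          exact lt_of_le_of_lt this hx
        rw [List.countP_eq_length.2 hall, List.length_take]
        omega
      calc l = (s.take l).countP _ := htake.symm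
        _ ≤ _ := by conv_rhs => rw [hsplit]
                    rw [List.countP_append]; omega
    omega

lemma rank_lemma {m l : ℕ} (hlm : l ≤ m) (y : Fin m → ℝ) :
    l ≤ (Finset.univ.filter fun k : Fin m =>
      (Finset.univ.filter fun i => y i < y k).card < l).card := by
  set σ := Tuple.sort y with hσ
  have hmono : Monotone (y ∘ σ) := Tuple.monotone_sort y
  -- small indices mapped by σ land in the filter set
  have hsub : (Finset.univ.filter fun j : Fin m => (j : ℕ) < l).image σ ⊆
      Finset.univ.filter fun k : Fin m =>
        (Finset.univ.filter fun i => y i < y k).card < l := by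
    intro k hk
    simp only [Finset.mem_image, Finset.mem_filter, Finset.mem_univ, true_and] at hk ⊢
    obtain ⟨j, hj, rfl⟩ := hk
    -- reindex the filter by σ
    have hcardeq : (Finset.univ.filter fun i => y i < y (σ j)).card
        = (Finset.univ.filter fun i => y (σ i) < y (σ j)).card := by
      symm
      apply Finset.card_bij (fun i _ => σ i)
      · intro i hi; simp only [Finset.mem_filter, Finset.mem_univ, true_and] at hi ⊢; exact hi
      · intro a _ b _ hab; exact σ.injective hab
      · intro b hb
        refine ⟨σ.symm b, ?_, by simp⟩
        simp only [Finset.mem_filter, Finset.mem_univ, true_and, Equiv.apply_symm_apply] at hb ⊢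
        exact hb
    rw [hcardeq]
    have hsubset : (Finset.univ.filter fun i => y (σ i) < y (σ j)) ⊆
        Finset.univ.filter fun i : Fin m => i < j := by
      intro i hi
      simp only [Finset.mem_filter, Finset.mem_univ, true_and] at hi ⊢
      by_contra h
      push_neg at h
      exact absurd (hmono h) (not_le.2 hi)
    calc (Finset.univ.filter fun i => y (σ i) < y (σ j)).card
        ≤ (Finset.univ.filter fun i : Fin m => i < j).card := Finset.card_le_card hsubset
      _ = (j : ℕ) := by
          have : (Finset.univ.filter fun i : Fin m => i < j) = Finset.Iio j := by
            ext i; simp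
          rw [this, Fin.card_Iio]
      _ < l := hj
  calc l = (Finset.univ.filter fun j : Fin m => (j : ℕ) < l).card := by
        symm
        have : (Finset.univ.filter fun j : Fin m => (j : ℕ) < l)
            = Finset.univ.image (Fin.castLE hlm) := by
          ext j
          simp only [Finset.mem_filter, Finset.mem_univ, true_and, Finset.mem_image]
          constructor
          · intro hj; exact ⟨⟨j, hj⟩, rfl⟩
          · rintro ⟨i, -, rfl⟩; exact i.isLt
        rw [this, Finset.card_image_of_injective _ (Fin.castLE_injective hlm), Finset.card_univ,
          Fintype.card_fin]
    _ = ((Finset.univ.filter fun j : Fin m => (j : ℕ) < l).image σ).card := by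
        rw [Finset.card_image_of_injective _ σ.injective]
    _ ≤ _ := Finset.card_le_card hsub

open MeasureTheory ProbabilityTheory ENNReal

/-- Split conformal prediction marginal coverage: with i.i.d. scores
`X 0, …, X (n-1)` (calibration) and `X n` (test), letting `q̂` be the
`⌈(n+1)(1-α)⌉`-th smallest calibration score, the test score is covered
with probability at least `1 - α`. -/
theorem conformal_prediction_coverage
    {Ω : Type*} [MeasurableSpace Ω] (μ : Measure Ω) [IsProbabilityMeasure μ]
    (n : ℕ) (X : Fin (n + 1) → Ω → ℝ)
    (hmeas : ∀ i, Measurable (X i))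
    (hindep : iIndepFun X μ)
    (hid : ∀ i j, IdentDistrib (X i) (X j) μ μ)
    (α : ℝ) (hα : α ∈ Set.Ioo (0:ℝ) 1)
    (l : ℕ) (hl : l = ⌈((n:ℝ) + 1) * (1 - α)⌉₊) (hln : l ≤ n)
    (qhat : Ω → ℝ)
    (hq : ∀ ω, qhat ω =
      (((List.ofFn fun i : Fin n => X i.castSucc ω).insertionSort (· ≤ ·)).getD (l - 1) 0)) :
    ENNReal.ofReal (1 - α) ≤ μ {ω | X (Fin.last n) ω ≤ qhat ω} := by
  obtain ⟨hα0, hα1⟩ := hα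
  have hl1 : 1 ≤ l := by
    rw [hl]
    rw [Nat.one_le_iff_ne_zero, ← Nat.pos_iff_ne_zero, Nat.ceil_pos]
    have h1 : (0:ℝ) < 1 - α := by linarith
    positivity
  -- the joint random vector
  set V : Ω → (Fin (n+1) → ℝ) := fun ω i => X i ω with hVdef
  have hVmeas : Measurable V := measurable_pi_lambda _ hmeas
  set ν : Measure ℝ := μ.map (X 0) with hνdef
  haveI : IsProbabilityMeasure ν := Measure.isProbabilityMeasure_map (hmeas 0).aemeasurable
  have hmapXi : ∀ i, μ.map (X i) = ν := fun i => (hid i 0).map_eq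
  have hV : μ.map V = Measure.pi (fun _ => ν) := by
    refine (Measure.pi_eq fun s hs => ?_).symm
    rw [Measure.map_apply hVmeas (MeasurableSet.univ_pi hs)]
    have hpre : V ⁻¹' Set.univ.pi s = ⋂ i ∈ Finset.univ, X i ⁻¹' s i := by
      ext ω; simp [hVdef, Set.mem_pi]
    rw [hpre, hindep.measure_inter_preimage_eq_mul Finset.univ (fun i _ => hs i)]
    refine Finset.prod_congr rfl fun i _ => ?_
    rw [← hmapXi i, Measure.map_apply (hmeas i) (hs i)]
  -- rank function and events
  set N : (Fin (n+1) → ℝ) → Fin (n+1) → ℕ :=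
    fun y k => (Finset.univ.filter fun i => y i < y k).card with hNdef
  have hNmeas : ∀ k, Measurable fun y => N y k := by
    intro k
    have hNe : (fun y => N y k) = fun y => ∑ i, if y i < y k then 1 else 0 := by
      funext y; exact Finset.card_filter _ _
    rw [hNe]
    exact Finset.measurable_sum _ fun i _ =>
      Measurable.ite (measurableSet_lt (measurable_pi_apply i) (measurable_pi_apply k))
        measurable_const measurable_const
  set B : Fin (n+1) → Set (Fin (n+1) → ℝ) := fun k => {y | N y k < l} with hBdef
  have hBmeas : ∀ k, MeasurableSet (B k) := fun k => (hNmeas k) measurableSet_Iio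
  -- permutation invariance of the product measure
  have hperm : ∀ e : Equiv.Perm (Fin (n+1)),
      (Measure.pi fun _ : Fin (n+1) => ν).map (fun y => y ∘ e) = Measure.pi (fun _ => ν) := by
    intro e
    refine (Measure.pi_eq fun s hs => ?_).symm
    have hmc : Measurable fun y : Fin (n+1) → ℝ => y ∘ e :=
      measurable_pi_lambda _ fun i => measurable_pi_apply _
    rw [Measure.map_apply hmc (MeasurableSet.univ_pi hs)]
    have hpre : (fun y : Fin (n+1) → ℝ => y ∘ e) ⁻¹' Set.univ.pi s
        = Set.univ.pi (fun j => s (e.symm j)) := by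
      ext y
      simp only [Set.mem_preimage, Set.mem_pi, Set.mem_univ, true_implies, Function.comp]
      constructor
      · intro h j; have := h (e.symm j); simpa using this
      · intro h i; have := h (e i); simpa using this
    rw [hpre, Measure.pi_pi]
    exact Equiv.prod_comp e.symm (fun i => ν (s i))
  -- all events have the same probability
  have hcomp_meas : ∀ e : Equiv.Perm (Fin (n+1)),
      Measurable fun y : Fin (n+1) → ℝ => y ∘ e :=
    fun e => measurable_pi_lambda _ fun i => measurable_pi_apply _
  have hμB : ∀ k, μ (V ⁻¹' B k) = μ (V ⁻¹' B (Fin.last n)) := by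
    intro k
    have hA : ∀ j, μ (V ⁻¹' B j) = (Measure.pi fun _ : Fin (n+1) => ν) (B j) := by
      intro j
      rw [← hV, Measure.map_apply hVmeas (hBmeas j)]
    rw [hA, hA]
    set e : Equiv.Perm (Fin (n+1)) := Equiv.swap k (Fin.last n) with hedef
    have hBk : B k = (fun y => y ∘ e) ⁻¹' B (Fin.last n) := by
      ext y
      simp only [hBdef, Set.mem_preimage, Set.mem_setOf_eq]
      have hNeq : N (y ∘ e) (Fin.last n) = N y k := by
        simp only [hNdef, Function.comp]
        have he : y (e (Fin.last n)) = y k := by rw [hedef, Equiv.swap_apply_right]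
        simp only [he]
        symm
        apply Finset.card_bij (fun i _ => e.symm i)
        · intro i hi
          simp only [Finset.mem_filter, Finset.mem_univ, true_and,
            Equiv.apply_symm_apply] at hi ⊢
          exact hi
        · intro a _ b _ hab; exact e.symm.injective hab
        · intro b hb
          refine ⟨e b, ?_, by simp⟩
          simp only [Finset.mem_filter, Finset.mem_univ, true_and] at hb ⊢
          exact hb
      rw [hNeq]
    rw [hBk, ← Measure.map_apply (hcomp_meas e) (hBmeas (Fin.last n)), hperm e]
  -- pointwise rank bound and summation
  have hsum : (l : ℝ≥0∞) ≤ ∑ k : Fin (n+1), μ (V ⁻¹' B k) := by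
    have hpt : ∀ ω, (l : ℝ≥0∞) ≤ ∑ k : Fin (n+1),
        (V ⁻¹' B k).indicator (fun _ => (1:ℝ≥0∞)) ω := by
      intro ω
      have hrank := rank_lemma (show l ≤ n + 1 by omega) (V ω)
      have hcast : ∑ k : Fin (n+1), (V ⁻¹' B k).indicator (fun _ => (1:ℝ≥0∞)) ω
          = ((Finset.univ.filter fun k : Fin (n+1) => N (V ω) k < l).card : ℝ≥0∞) := by
        rw [Finset.card_filter, Nat.cast_sum]
        refine Finset.sum_congr rfl fun k _ => ?_
        by_cases h : N (V ω) k < l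
        · simp [Set.indicator_apply, hBdef, h, Set.mem_preimage]
        · simp [Set.indicator_apply, hBdef, h, Set.mem_preimage]
      rw [hcast]
      exact_mod_cast hrank
    calc (l : ℝ≥0∞) = ∫⁻ _, (l : ℝ≥0∞) ∂μ := by simp
      _ ≤ ∫⁻ ω, ∑ k : Fin (n+1), (V ⁻¹' B k).indicator (fun _ => (1:ℝ≥0∞)) ω ∂μ :=
          lintegral_mono hpt
      _ = ∑ k : Fin (n+1), ∫⁻ ω, (V ⁻¹' B k).indicator (fun _ => (1:ℝ≥0∞)) ω ∂μ :=
          lintegral_finset_sum _ fun k _ =>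
            measurable_const.indicator (hVmeas (hBmeas k))
      _ = ∑ k : Fin (n+1), μ (V ⁻¹' B k) := by
          refine Finset.sum_congr rfl fun k _ => ?_
          exact lintegral_indicator_one (hVmeas (hBmeas k))
  have hsum' : (l : ℝ≥0∞) ≤ (n + 1 : ℝ≥0∞) * μ (V ⁻¹' B (Fin.last n)) := by
    refine le_trans hsum ?_
    rw [Finset.sum_congr rfl fun k _ => hμB k, Finset.sum_const, Finset.card_univ,
      Fintype.card_fin, nsmul_eq_mul]
    push_cast
    exact le_rfl
  -- identify the coverage event
  have hevent : {ω | X (Fin.last n) ω ≤ qhat ω} = V ⁻¹' B (Fin.last n) := by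
    ext ω
    simp only [Set.mem_setOf_eq, Set.mem_preimage, hBdef, hNdef, hVdef]
    set x := X (Fin.last n) ω with hxdef
    set L := List.ofFn fun i : Fin n => X i.castSucc ω with hLdef
    have hsorted : List.Pairwise (· ≤ ·) (L.insertionSort (· ≤ ·)) :=
      List.pairwise_insertionSort _ L
    have hlen : (L.insertionSort (· ≤ ·)).length = n := by
      rw [(List.perm_insertionSort _ L).length_eq, hLdef, List.length_ofFn]
    have hcount : (L.insertionSort (· ≤ ·)).countP (fun z => decide (z < x))
        = (Finset.univ.filter fun i : Fin (n+1) => X i ω < x).card := by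
      rw [(List.perm_insertionSort _ L).countP_eq, hLdef, countP_ofFn']
      rw [Finset.card_filter, Finset.card_filter, Fin.sum_univ_castSucc]
      simp [hxdef]
    rw [hq ω, sorted_le_getD_iff hsorted hl1 (by omega : l ≤ (L.insertionSort (· ≤ ·)).length) x,
      hcount]
  rw [hevent]
  -- final arithmetic
  have hceil : ((n:ℝ) + 1) * (1 - α) ≤ (l : ℝ) := by rw [hl]; exact Nat.le_ceil _
  have hmul : ((n:ℝ≥0∞) + 1) * ENNReal.ofReal (1 - α) ≤
      ((n:ℝ≥0∞) + 1) * μ (V ⁻¹' B (Fin.last n)) := by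
    calc ((n:ℝ≥0∞) + 1) * ENNReal.ofReal (1 - α)
        = ENNReal.ofReal (((n:ℝ) + 1) * (1 - α)) := by
          rw [ENNReal.ofReal_mul (by positivity)]
          congr 1
          rw [ENNReal.ofReal_add (by positivity) zero_le_one]
          simp
      _ ≤ ENNReal.ofReal (l : ℝ) := ENNReal.ofReal_le_ofReal hceil
      _ = (l : ℝ≥0∞) := by simp [ENNReal.ofReal_natCast]
      _ ≤ _ := hsum'
  have hne : ((n:ℝ≥0∞) + 1) ≠ 0 := by simp
  have hnt : ((n:ℝ≥0∞) + 1) ≠ ⊤ := by simp [ENNReal.add_eq_top]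
  exact (ENNReal.mul_le_mul_iff_right hne hnt).mp hmul
end

section
/- Let C, G: \mathcal{X} \to \mathbb{R} on a nonempty set \mathcal{X}, and define \hat{V}(z) = \inf_{u} \max(C(u) - z, G(u)). Define V = \inf\{ z \ge 0 : \hat{V}(z) \le 0 \} and V' = \inf\{ C(u) : u \in \mathcal{X},\ G(u) \le 0 \}. If C is nonnegative and the relevant infima are attained, then V = V'. -/
/-- Equivalence of the epigraph formulation with the original state-constrained
problem: with `V̂(z) = inf_u max(C(u) - z, G(u))` (infima attained), `C ≥ 0`,
`V = inf {z ≥ 0 : V̂(z) ≤ 0}` and `V' = inf {C(u) : G(u) ≤ 0}`, one has `V = V'`. -/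
theorem epigraph_value_eq_constrained_value
    {X : Type*} [Nonempty X] (C G : X → ℝ) (Vhat : ℝ → ℝ)
    (hC : ∀ u, 0 ≤ C u)
    (hVhat : ∀ z, (∃ u, Vhat z = max (C u - z) (G u)) ∧
      ∀ u, Vhat z ≤ max (C u - z) (G u))
    (hfeas : ∃ u, G u ≤ 0)
    (hattain : ∃ zs, IsLeast {z : ℝ | 0 ≤ z ∧ Vhat z ≤ 0} zs)
    (hattain' : ∃ u, G u ≤ 0 ∧ IsLeast (C '' {u | G u ≤ 0}) (C u)) :
    sInf {z : ℝ | 0 ≤ z ∧ Vhat z ≤ 0} = sInf (C '' {u | G u ≤ 0}) := by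
  obtain ⟨zs, hzs⟩ := hattain
  obtain ⟨u0, hu0, hu0least⟩ := hattain'
  rw [hzs.csInf_eq, hu0least.csInf_eq]
  have h1 : zs ≤ C u0 := by
    apply hzs.2
    refine ⟨hC u0, ?_⟩
    have := (hVhat (C u0)).2 u0
    simpa [hu0] using this.trans (max_le (by linarith) hu0)
  have h2 : C u0 ≤ zs := by
    obtain ⟨u, hu⟩ := (hVhat zs).1
    have hle : max (C u - zs) (G u) ≤ 0 := hu ▸ hzs.1.2
    have hGu : G u ≤ 0 := le_trans (le_max_right _ _) hle
    have hCu : C u - zs ≤ 0 := le_trans (le_max_left _ _) hle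
    have := hu0least.2 ⟨u, hGu, rfl⟩
    linarith
  linarith
end
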